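/- Let n ≥ 3 and C ≥ 0 be natural numbers. Then the set of finite multisets s of positive natural numbers satisfying ∑_{x ∈ s} (n·x − 1) ≤ C has cardinality at most the number of partitions of C (the cardinality of Nat.Partition C). -/
import Mathlib

theorem ramification_profiles_card_le_partitions (n C : ℕ) (hn : 3 ≤ n) :
    {s : Multiset ℕ | (∀ x ∈ s, 0 < x) ∧
      (s.map (fun x => n * x - 1)).sum ≤ C}.ncard ≤ Fintype.card (Nat.Partition C) := by
  set S := {s : Multiset ℕ | (∀ x ∈ s, 0 < x) ∧
      (s.map (fun x => n * x - 1)).sum ≤ C} with hS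
  set T := {p : Multiset ℕ | (∀ x ∈ p, 0 < x) ∧ p.sum = C} with hT
  set g : Multiset ℕ → Multiset ℕ := fun s =>
    s.map (fun x => n * x - 1) + Multiset.replicate (C - (s.map (fun x => n * x - 1)).sum) 1
    with hg
  -- key: for s in S, elements of s.map (n*x-1) are ≥ 2
  have hge2 : ∀ s ∈ S, ∀ y ∈ s.map (fun x => n * x - 1), 2 ≤ y := by
    intro s hs y hy
    obtain ⟨x, hx, rfl⟩ := Multiset.mem_map.mp hy
    have hx1 : 1 ≤ x := hs.1 x hx
    have : 3 ≤ n * x := le_trans hn (Nat.le_mul_of_pos_right n (hs.1 x hx))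
    omega
  have hrec : ∀ s ∈ S, ((g s).filter (fun y => 2 ≤ y)).map (fun y => (y + 1) / n) = s := by
    intro s hs
    have h1 : (g s).filter (fun y => 2 ≤ y) = s.map (fun x => n * x - 1) := by
      rw [hg]
      simp only [Multiset.filter_add]
      rw [Multiset.filter_eq_self.mpr (hge2 s hs), Multiset.filter_eq_nil.mpr]
      · simp
      · intro a ha
        rw [Multiset.eq_of_mem_replicate ha]
        omega
    rw [h1, Multiset.map_map]
    have : ∀ x ∈ s, ((fun y => (y + 1) / n) ∘ (fun x => n * x - 1)) x = id x := by
      intro x hx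
      have hx1 : 1 ≤ x := hs.1 x hx
      have : 1 ≤ n * x := Nat.one_le_iff_ne_zero.mpr (by positivity)
      simp only [Function.comp_apply, id]
      rw [Nat.sub_add_cancel this, Nat.mul_div_cancel_left x (by omega)]
    rw [Multiset.map_congr rfl this, Multiset.map_id]
  have hinj : Set.InjOn g S := by
    intro s hs t ht h
    rw [← hrec s hs, ← hrec t ht, h]
  have hmaps : Set.MapsTo g S T := by
    intro s hs
    constructor
    · intro x hx
      rw [hg] at hx
      rcases Multiset.mem_add.mp hx with h | h
      · exact lt_of_lt_of_le (by norm_num) (hge2 s hs x h)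
      · rw [Multiset.eq_of_mem_replicate h]; norm_num
    · rw [hg]
      simp only [Multiset.sum_add, Multiset.sum_replicate, smul_eq_mul, mul_one]
      exact Nat.add_sub_cancel' hs.2
  have hTfin : T.Finite := by
    have : T = Set.range (fun p : Nat.Partition C => p.parts) := by
      ext p
      constructor
      · rintro ⟨h1, h2⟩
        exact ⟨⟨p, fun {x} hx => h1 x hx, h2⟩, rfl⟩
      · rintro ⟨q, rfl⟩
        exact ⟨fun x hx => q.parts_pos hx, q.parts_sum⟩
    rw [this]
    exact Set.finite_range _
  have hcard : T.ncard ≤ Fintype.card (Nat.Partition C) := by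
    have hTeq : T = Set.range (fun p : Nat.Partition C => p.parts) := by
      ext p
      constructor
      · rintro ⟨h1, h2⟩
        exact ⟨⟨p, fun {x} hx => h1 x hx, h2⟩, rfl⟩
      · rintro ⟨q, rfl⟩
        exact ⟨fun x hx => q.parts_pos hx, q.parts_sum⟩
    rw [hTeq]
    calc (Set.range (fun p : Nat.Partition C => p.parts)).ncard
        ≤ (Set.univ : Set (Nat.Partition C)).ncard := by
          rw [← Set.image_univ]
          exact Set.ncard_image_le Set.finite_univ
      _ = Fintype.card (Nat.Partition C) := by
          rw [Set.ncard_univ, Nat.card_eq_fintype_card]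
  exact le_trans (Set.ncard_le_ncard_of_injOn g hmaps hinj hTfin) hcard
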